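/- For every α > 0 and k ≥ 1, the determinant of the k×k matrix with (i,j) entry Γ(i + αj) equals (∏_{j=1}^k Γ(1 + αj)) · α^(k(k-1)/2) · ∏_{1≤i<j≤k}(j - i). In particular it is strictly positive. -/

import Mathlib

open Finset Polynomial

private lemma gamma_shift (x : ℝ) (hx : 0 < x) : ∀ i : ℕ,
    Real.Gamma ((i + 1 : ℝ) + x) = Real.Gamma (1 + x) * ∏ r ∈ range i, ((r + 1 : ℝ) + x)
  | 0 => by simp
  | (i + 1) => by
    have h : (((i + 1 : ℕ) : ℝ) + 1) + x = (((i : ℝ) + 1) + x) + 1 := by push_cast; ring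
    have hne : ((i : ℝ) + 1) + x ≠ 0 := by positivity
    rw [h, Real.Gamma_add_one hne, gamma_shift x hx i, prod_range_succ]
    ring

theorem det_gamma_shifted (α : ℝ) (hα : 0 < α) (k : ℕ) (hk : 1 ≤ k) :
    Matrix.det (Matrix.of fun i j : Fin k =>
        Real.Gamma ((i.val + 1 : ℝ) + α * (j.val + 1)))
      = (∏ j ∈ Finset.range k, Real.Gamma (1 + α * (j + 1))) *
          α ^ (k * (k - 1) / 2) * ∏ j ∈ Finset.range k, (Nat.factorial j : ℝ) ∧
    0 < Matrix.det (Matrix.of fun i j : Fin k =>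
        Real.Gamma ((i.val + 1 : ℝ) + α * (j.val + 1))) := by
  set p : Fin k → ℝ[X] := fun i => ∏ r ∈ range i.val, (X + C ((r : ℝ) + 1)) with hp
  have hmonic : ∀ i, (p i).Monic := fun i =>
    monic_prod_of_monic _ _ fun r _ => monic_X_add_C _
  have hdeg : ∀ i : Fin k, (p i).natDegree = i.val := by
    intro i
    rw [hp, natDegree_prod _ _ (fun r _ => (monic_X_add_C _).ne_zero)]
    simp only [natDegree_X_add_C]
    simp
  have heval : ∀ (i : Fin k) (x : ℝ), (p i).eval x = ∏ r ∈ range i.val, ((r + 1 : ℝ) + x) := by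
    intro i x
    rw [hp]
    simp only [eval_prod, eval_add, eval_X, eval_C]
    exact Finset.prod_congr rfl fun r _ => by ring
  -- factor the Gamma values
  have hfact : (Matrix.of fun i j : Fin k =>
      Real.Gamma ((i.val + 1 : ℝ) + α * (j.val + 1)))
      = Matrix.of fun i j : Fin k =>
          Real.Gamma (1 + α * ((j : ℝ) + 1)) * (p i).eval (α * ((j : ℝ) + 1)) := by
    ext i j
    have hx : (0 : ℝ) < α * (j.val + 1) := by positivity
    simp only [Matrix.of_apply]
    rw [gamma_shift _ hx i.val, heval]
  -- the polynomial determinant is a Vandermonde determinant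
  have hvdm : (Matrix.of fun i j : Fin k => (p i).eval (α * ((j : ℝ) + 1))).det
      = (Matrix.vandermonde fun j : Fin k => α * ((j : ℝ) + 1)).det := by
    rw [Matrix.det_eval_matrixOfPolynomials_eq_det_vandermonde
        (fun j : Fin k => α * ((j : ℝ) + 1)) p hdeg hmonic, ← Matrix.det_transpose]
    rfl
  -- count the pairs
  have hcount : ∑ i : Fin k, (Ioi i).card = k * (k - 1) / 2 := by
    simp only [Fin.card_Ioi]
    rw [Fin.sum_univ_eq_sum_range (fun i => k - 1 - i),
      show (∑ i ∈ range k, (k - 1 - i)) = ∑ i ∈ range k, i from Finset.sum_range_reflect id k,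
      Finset.sum_range_id]
  -- the Vandermonde value
  have hvalue : (Matrix.vandermonde fun j : Fin k => α * ((j : ℝ) + 1)).det
      = α ^ (k * (k - 1) / 2) * ∏ j ∈ Finset.range k, (Nat.factorial j : ℝ) := by
    rw [Matrix.det_vandermonde]
    have : ∀ i : Fin k, ∀ j ∈ Ioi i,
        α * ((j : ℝ) + 1) - α * ((i : ℝ) + 1) = α * ((j : ℝ) - (i : ℝ)) := by
      intro i j _; ring
    calc ∏ i : Fin k, ∏ j ∈ Ioi i, (α * ((j : ℝ) + 1) - α * ((i : ℝ) + 1))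
        = ∏ i : Fin k, ∏ j ∈ Ioi i, (α * ((j : ℝ) - (i : ℝ))) := by
          exact Finset.prod_congr rfl fun i _ => Finset.prod_congr rfl (this i)
      _ = (∏ i : Fin k, ∏ _j ∈ Ioi i, α) *
          ∏ i : Fin k, ∏ j ∈ Ioi i, ((j : ℝ) - (i : ℝ)) := by
          rw [← Finset.prod_mul_distrib]
          exact Finset.prod_congr rfl fun i _ => by rw [← Finset.prod_mul_distrib]
      _ = α ^ (k * (k - 1) / 2) * ∏ j ∈ Finset.range k, (Nat.factorial j : ℝ) := by
          congr 1
          · simp only [Finset.prod_const]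
            rw [Finset.prod_pow_eq_pow_sum, hcount]
          · obtain ⟨n, rfl⟩ := Nat.exists_eq_succ_of_ne_zero (show k ≠ 0 by omega)
            rw [← Matrix.det_vandermonde (fun i : Fin (n + 1) => ((i : ℕ) : ℝ)),
              Matrix.det_vandermonde_id_eq_superFactorial (R := ℝ) n,
              ← Nat.prod_range_succ_factorial n, Nat.cast_prod]
  have hmain : (Matrix.of fun i j : Fin k =>
      Real.Gamma ((i.val + 1 : ℝ) + α * (j.val + 1))).det
      = (∏ j ∈ Finset.range k, Real.Gamma (1 + α * (j + 1))) *
          (α ^ (k * (k - 1) / 2) * ∏ j ∈ Finset.range k, (Nat.factorial j : ℝ)) := by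
    have hvdm' : (Matrix.det fun i j : Fin k => (p i).eval (α * ((j : ℝ) + 1)))
        = (Matrix.vandermonde fun j : Fin k => α * ((j : ℝ) + 1)).det := hvdm
    rw [hfact, Matrix.det_mul_row (fun j : Fin k => Real.Gamma (1 + α * ((j : ℝ) + 1)))
        (fun i j : Fin k => (p i).eval (α * ((j : ℝ) + 1))), hvdm', hvalue]
    congr 1
    rw [Fin.prod_univ_eq_prod_range (fun j => Real.Gamma (1 + α * ((j : ℝ) + 1)))]
  constructor
  · rw [hmain]; ring
  · rw [hmain]
    have h1 : 0 < ∏ j ∈ Finset.range k, Real.Gamma (1 + α * ((j : ℝ) + 1)) :=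
      Finset.prod_pos fun j _ => Real.Gamma_pos_of_pos (by positivity)
    have h2 : 0 < ∏ j ∈ Finset.range k, (Nat.factorial j : ℝ) :=
      Finset.prod_pos fun j _ => by positivity
    positivity
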